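/- Let L^{γδ}_{αβ} be the q³-boson valued L matrix components (L^{00}_{00}=L^{11}_{11}=1, L^{01}_{01}=K, L^{10}_{10}=-K, L^{10}_{01}=A⁺, L^{01}_{10}=A⁻, others zero). For |q| < 1 and |z| < 1, the n = 1 boundary-vector matrix elements R^{γδ}_{αβ}(z) := ((z;q³)_∞/(-zq³;q³)_∞) ⟨χ| z^h L^{γδ}_{αβ} |χ⟩, with ⟨χ| = ∑ ⟨m|/(q³;q³)_m, |χ⟩ = ∑ |m⟩/(q³;q³)_m and ⟨m|m'⟩ = (q⁶;q⁶)_m δ_{m,m'}, evaluate to: R^{00}_{00} = R^{11}_{11} = 1, R^{01}_{01} = q^{3/2}(1-z)/(1+q³z), R^{10}_{10} = -q^{3/2}(1-z)/(1+q³z), R^{10}_{01} = (1+q³)z/(1+q³z), R^{01}_{10} = (1+q³)/(1+q³z). -/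

import Mathlib

/-- The operator on the Fock space `(ℕ →₀ ℂ)` sending `|m⟩` to `c m • |g m⟩`. -/
noncomputable def fockOp (c : ℕ → ℂ) (g : ℕ → ℕ) : Module.End ℂ (ℕ →₀ ℂ) :=
  Finsupp.lsum ℂ fun m => c m • Finsupp.lsingle (g m)

/-- `(a; p)_n = ∏_{k=1}^n (1 - a p^{k-1})`. -/
noncomputable def qPoch (a p : ℂ) (n : ℕ) : ℂ := ∏ k ∈ Finset.range n, (1 - a * p ^ k)

/-- `(a; p)_∞ = ∏_{k ≥ 1} (1 - a p^{k-1})`. -/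
noncomputable def qPochInf (a p : ℂ) : ℂ := ∏' k : ℕ, (1 - a * p ^ k)

/-- The `q³`-boson valued `L` matrix `L^{γδ}_{αβ}` (see Statement 6). -/
noncomputable def Lmat (q sq : ℂ) (γ δ α β : Fin 2) : Module.End ℂ (ℕ →₀ ℂ) :=
  let AP := fockOp (fun _ => 1) (· + 1)
  let AM := fockOp (fun m => 1 - q ^ (6 * m)) (· - 1)
  let K := fockOp (fun m => sq ^ 3 * q ^ (3 * m)) id
  if (γ, δ, α, β) = (0, 0, 0, 0) ∨ (γ, δ, α, β) = (1, 1, 1, 1) then 1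
  else if (γ, δ, α, β) = (0, 1, 0, 1) then K
  else if (γ, δ, α, β) = (1, 0, 1, 0) then -K
  else if (γ, δ, α, β) = (1, 0, 0, 1) then AP
  else if (γ, δ, α, β) = (0, 1, 1, 0) then AM
  else 0


open Complex Filter

lemma one_sub_ne_zero {w : ℂ} (hw : ‖w‖ < 1) : 1 - w ≠ 0 := by
  intro h
  have : w = 1 := by linear_combination -h
  rw [this] at hw; simp at hw

lemma norm_mul_pow_lt {p w : ℂ} (hp : ‖p‖ < 1) (hw : ‖w‖ < 1) (k : ℕ) :
    ‖w * p ^ k‖ < 1 := by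
  rw [norm_mul, norm_pow]
  calc ‖w‖ * ‖p‖ ^ k ≤ ‖w‖ * 1 := by
        apply mul_le_mul_of_nonneg_left _ (norm_nonneg w)
        exact pow_le_one₀ (norm_nonneg p) hp.le
    _ < 1 := by simpa using hw

lemma qPoch_succ (a p : ℂ) (n : ℕ) :
    qPoch a p (n + 1) = qPoch a p n * (1 - a * p ^ n) := Finset.prod_range_succ _ _

lemma qPoch_ne_zero {a p : ℂ} (hp : ‖p‖ < 1) (ha : ‖a‖ < 1) (n : ℕ) :
    qPoch a p n ≠ 0 := by
  apply Finset.prod_ne_zero_iff.2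
  intro k _
  exact one_sub_ne_zero (norm_mul_pow_lt hp ha k)

/-- `(-p;p)_n / (p;p)_n`. -/
noncomputable def cc (p : ℂ) (n : ℕ) : ℂ := qPoch (-p) p n / qPoch p p n

lemma cc_zero (p : ℂ) : cc p 0 = 1 := by simp [cc, qPoch]

lemma cc_succ {p : ℂ} (hp : ‖p‖ < 1) (n : ℕ) :
    cc p (n + 1) * (1 - p * p ^ n) = cc p n * (1 + p * p ^ n) := by
  have h2 : qPoch p p n ≠ 0 := qPoch_ne_zero hp hp _
  have hfac : 1 - p * p ^ n ≠ 0 := one_sub_ne_zero (norm_mul_pow_lt hp hp n)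
  rw [cc, cc, qPoch_succ, qPoch_succ]
  field_simp
  ring

lemma qPoch_sq (p : ℂ) (n : ℕ) :
    qPoch (p^2) (p^2) n = qPoch p p n * qPoch (-p) p n := by
  rw [qPoch, qPoch, qPoch, ← Finset.prod_mul_distrib]
  apply Finset.prod_congr rfl
  intro k _
  ring

lemma cc_norm_le {p : ℂ} (hp : ‖p‖ < 1) (n : ℕ) :
    ‖cc p n‖ ≤ Real.exp (2 * ‖p‖ / ((1 - ‖p‖) * (1 - ‖p‖))) := by
  have hp0 : (0:ℝ) < 1 - ‖p‖ := by linarith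
  have hxval : ∀ k : ℕ, ‖p * p ^ k‖ = ‖p‖ ^ (k+1) := by
    intro k; rw [norm_mul, norm_pow, ← pow_succ']
  have hxle : ∀ k : ℕ, ‖p * p ^ k‖ ≤ ‖p‖ := by
    intro k; rw [hxval]
    calc ‖p‖ ^ (k+1) = ‖p‖ * ‖p‖ ^ k := by rw [pow_succ']
      _ ≤ ‖p‖ * 1 := mul_le_mul_of_nonneg_left (pow_le_one₀ (norm_nonneg p) hp.le) (norm_nonneg p)
      _ = ‖p‖ := mul_one _
  have key : ∀ k : ℕ, ‖(1 + p * p ^ k) / (1 - p * p ^ k)‖ ≤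
      Real.exp (2 * ‖p * p ^ k‖ / (1 - ‖p‖)) := by
    intro k
    have hx : ‖p * p ^ k‖ ≤ ‖p‖ := hxle k
    have hx0 : (0:ℝ) ≤ ‖p * p ^ k‖ := norm_nonneg _
    have hx1 : (0:ℝ) < 1 - ‖p * p ^ k‖ := by linarith
    have hnum : ‖1 + p * p ^ k‖ ≤ 1 + ‖p * p ^ k‖ := by
      have := norm_add_le (1:ℂ) (p * p ^ k); rwa [norm_one] at this
    have hden : 1 - ‖p * p ^ k‖ ≤ ‖1 - p * p ^ k‖ := by
      have := norm_sub_norm_le (1:ℂ) (p * p ^ k); rwa [norm_one] at this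
    rw [norm_div]
    have step1 : ‖1 + p * p ^ k‖ / ‖1 - p * p ^ k‖ ≤
        (1 + ‖p * p ^ k‖) / (1 - ‖p * p ^ k‖) :=
      div_le_div₀ (by positivity) hnum hx1 hden
    refine step1.trans ?_
    have step2a : (1 + ‖p * p ^ k‖) / (1 - ‖p * p ^ k‖)
        = 1 + 2 * ‖p * p ^ k‖ / (1 - ‖p * p ^ k‖) := by
      have hne : (1 - ‖p * p ^ k‖) ≠ 0 := ne_of_gt hx1
      rw [div_eq_iff hne, add_mul, div_mul_cancel₀ _ hne]
      ring
    have step2b : 2 * ‖p * p ^ k‖ / (1 - ‖p * p ^ k‖) ≤ 2 * ‖p * p ^ k‖ / (1 - ‖p‖) :=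
      div_le_div_of_nonneg_left (by positivity) hp0 (by linarith)
    rw [step2a]
    have := Real.add_one_le_exp (2 * ‖p * p ^ k‖ / (1 - ‖p‖))
    linarith
  -- rewrite cc as a product of quotients
  have hccprod : cc p n = ∏ k ∈ Finset.range n, ((1 + p * p ^ k) / (1 - p * p ^ k)) := by
    rw [cc, qPoch, qPoch, Finset.prod_div_distrib]
    congr 1
    apply Finset.prod_congr rfl
    intro k _; ring
  rw [hccprod]
  calc ‖∏ k ∈ Finset.range n, ((1 + p * p ^ k) / (1 - p * p ^ k))‖
      = ∏ k ∈ Finset.range n, ‖(1 + p * p ^ k) / (1 - p * p ^ k)‖ := norm_prod _ _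
    _ ≤ ∏ k ∈ Finset.range n, Real.exp (2 * ‖p * p ^ k‖ / (1 - ‖p‖)) :=
        Finset.prod_le_prod (fun k _ => norm_nonneg _) (fun k _ => key k)
    _ = Real.exp (∑ k ∈ Finset.range n, 2 * ‖p * p ^ k‖ / (1 - ‖p‖)) := by
        rw [Real.exp_sum]
    _ ≤ Real.exp (2 * ‖p‖ / ((1 - ‖p‖) * (1 - ‖p‖))) := by
        apply Real.exp_le_exp.2
        have hsum : ∑ k ∈ Finset.range n, ‖p‖ ^ (k+1) ≤ ‖p‖ / (1 - ‖p‖) := by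
          have h1 : ∑ k ∈ Finset.range n, ‖p‖ ^ (k+1)
              = ‖p‖ * ∑ k ∈ Finset.range n, ‖p‖ ^ k := by
            rw [Finset.mul_sum]
            apply Finset.sum_congr rfl
            intro k _; rw [pow_succ']
          have h2 : ∑ k ∈ Finset.range n, ‖p‖ ^ k ≤ (1 - ‖p‖)⁻¹ := by
            have := Summable.sum_le_tsum (Finset.range n) (fun k _ => by positivity)
              (summable_geometric_of_lt_one (norm_nonneg p) hp)
            rwa [tsum_geometric_of_lt_one (norm_nonneg p) hp] at this
          rw [h1, div_eq_mul_inv]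
          exact mul_le_mul_of_nonneg_left h2 (norm_nonneg p)
        calc ∑ k ∈ Finset.range n, 2 * ‖p * p ^ k‖ / (1 - ‖p‖)
            = (2 / (1 - ‖p‖)) * ∑ k ∈ Finset.range n, ‖p‖ ^ (k+1) := by
              rw [Finset.mul_sum]
              apply Finset.sum_congr rfl
              intro k _; rw [hxval]; ring
          _ ≤ (2 / (1 - ‖p‖)) * (‖p‖ / (1 - ‖p‖)) :=
              mul_le_mul_of_nonneg_left hsum (by positivity)
          _ = 2 * ‖p‖ / ((1 - ‖p‖) * (1 - ‖p‖)) := by field_simp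

section GG
variable {p : ℂ}

lemma cc_summable (hp : ‖p‖ < 1) {w : ℂ} (hw : ‖w‖ < 1) :
    Summable (fun n => cc p n * w ^ n) := by
  refine Summable.of_norm_bounded (g := fun n => Real.exp (2 * ‖p‖ / ((1 - ‖p‖) * (1 - ‖p‖))) * ‖w‖ ^ n) ?_ ?_
  · exact (summable_geometric_of_lt_one (norm_nonneg w) hw).mul_left _
  · intro n
    rw [norm_mul, norm_pow]
    exact mul_le_mul_of_nonneg_right (cc_norm_le hp n) (by positivity)

/-- `G(w) = ∑ cc n w^n`. -/
noncomputable def GG (p w : ℂ) : ℂ := ∑' n, cc p n * w ^ n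

lemma GG_funct (hp : ‖p‖ < 1) {w : ℂ} (hw : ‖w‖ < 1) :
    (1 - w) * GG p w = (1 + p * w) * GG p (p * w) := by
  have hpw : ‖p * w‖ < 1 := by
    rw [norm_mul]
    calc ‖p‖ * ‖w‖ ≤ 1 * ‖w‖ := mul_le_mul_of_nonneg_right hp.le (norm_nonneg w)
      _ = ‖w‖ := one_mul _
      _ < 1 := hw
  have S1 := cc_summable hp hw
  have S2 := cc_summable hp hpw
  -- LHS' : GG w - GG pw = ∑ cc n (1 - p^n) w^n
  have key : GG p w - GG p (p * w) = w * GG p w + p * w * GG p (p * w) := by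
    have lhs : GG p w - GG p (p * w) = ∑' n, (cc p n * w ^ n - cc p n * (p * w) ^ n) := by
      rw [GG, GG, S1.tsum_sub S2]
    have rhs : w * GG p w + p * w * GG p (p * w)
        = ∑' n, (w * (cc p n * w ^ n) + p * w * (cc p n * (p * w) ^ n)) := by
      rw [Summable.tsum_add (S1.mul_left w) (S2.mul_left (p * w)), tsum_mul_left, tsum_mul_left, GG, GG]
    rw [lhs, rhs]
    have hsum : Summable (fun n => cc p n * w ^ n - cc p n * (p * w) ^ n) := S1.sub S2
    rw [Summable.tsum_eq_zero_add hsum]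
    simp only [pow_zero, mul_one, sub_self, zero_add]
    apply tsum_congr
    intro n
    have h := cc_succ hp n
    calc cc p (n+1) * w ^ (n+1) - cc p (n+1) * (p * w) ^ (n+1)
        = (cc p (n+1) * (1 - p * p ^ n)) * w ^ (n+1) := by ring
      _ = (cc p n * (1 + p * p ^ n)) * w ^ (n+1) := by rw [h]
      _ = w * (cc p n * w ^ n) + p * w * (cc p n * (p * w) ^ n) := by ring
  linear_combination key

lemma GG_sub_one_norm (hp : ‖p‖ < 1) {w : ℂ} (hw : ‖w‖ < 1) :
    ‖GG p w - 1‖ ≤ Real.exp (2 * ‖p‖ / ((1 - ‖p‖) * (1 - ‖p‖))) * ‖w‖ / (1 - ‖w‖) := by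
  set C := Real.exp (2 * ‖p‖ / ((1 - ‖p‖) * (1 - ‖p‖))) with hC
  have hC0 : 0 < C := Real.exp_pos _
  have hsum := cc_summable hp hw
  have h0 : GG p w = 1 + ∑' n, cc p (n+1) * w ^ (n+1) := by
    rw [GG, Summable.tsum_eq_zero_add hsum, cc_zero, pow_zero, mul_one]
  rw [h0, add_sub_cancel_left]
  have hs2 : Summable (fun n => C * ‖w‖ ^ (n+1)) := by
    apply Summable.comp_injective (f := fun n => C * ‖w‖ ^ n) ?_ (add_left_injective 1)
    exact (summable_geometric_of_lt_one (norm_nonneg w) hw).mul_left _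
  calc ‖∑' n, cc p (n+1) * w ^ (n+1)‖ ≤ ∑' n, C * ‖w‖ ^ (n+1) := by
        apply tsum_of_norm_bounded hs2.hasSum
        intro n
        rw [norm_mul, norm_pow]
        exact mul_le_mul_of_nonneg_right (cc_norm_le hp _) (by positivity)
    _ = C * ‖w‖ * ∑' n, ‖w‖ ^ n := by
        rw [← tsum_mul_left]
        apply tsum_congr; intro n; ring
    _ = C * ‖w‖ / (1 - ‖w‖) := by
        rw [tsum_geometric_of_lt_one (norm_nonneg w) hw]
        rw [div_eq_mul_inv]
end GG

section P
variable {p : ℂ}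

lemma log_norm_le (hp : ‖p‖ < 1) {w : ℂ} (hw : ‖w‖ < 1) (k : ℕ) :
    ‖Complex.log (1 - w * p ^ k)‖ ≤ ((1 - ‖w‖)⁻¹ / 2 + 1) * (‖w‖ * ‖p‖ ^ k) := by
  have hz : ‖-(w * p ^ k)‖ < 1 := by rw [norm_neg]; exact norm_mul_pow_lt hp hw k
  have h := Complex.norm_log_one_add_le hz
  have heq : 1 + -(w * p ^ k) = 1 - w * p ^ k := by ring
  rw [heq] at h
  refine h.trans ?_
  rw [norm_neg, norm_mul, norm_pow]
  have hx : ‖w‖ * ‖p‖ ^ k ≤ ‖w‖ := by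
    calc ‖w‖ * ‖p‖ ^ k ≤ ‖w‖ * 1 :=
      mul_le_mul_of_nonneg_left (pow_le_one₀ (norm_nonneg p) hp.le) (norm_nonneg w)
    _ = ‖w‖ := mul_one _
  have hx0 : (0:ℝ) ≤ ‖w‖ * ‖p‖ ^ k := by positivity
  have hw1 : (0:ℝ) < 1 - ‖w‖ := by linarith
  have hinv : (1 - ‖w‖ * ‖p‖ ^ k)⁻¹ ≤ (1 - ‖w‖)⁻¹ := by
    apply inv_anti₀ hw1 (by linarith)
  have hsq : (‖w‖ * ‖p‖ ^ k) ^ 2 ≤ ‖w‖ * ‖p‖ ^ k := by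
    nlinarith
  calc (‖w‖ * ‖p‖ ^ k) ^ 2 * (1 - ‖w‖ * ‖p‖ ^ k)⁻¹ / 2 + ‖w‖ * ‖p‖ ^ k
      ≤ (‖w‖ * ‖p‖ ^ k) * (1 - ‖w‖)⁻¹ / 2 + ‖w‖ * ‖p‖ ^ k := by
        have h1 : (‖w‖ * ‖p‖ ^ k) ^ 2 * (1 - ‖w‖ * ‖p‖ ^ k)⁻¹
            ≤ (‖w‖ * ‖p‖ ^ k) * (1 - ‖w‖)⁻¹ := by
          apply mul_le_mul hsq hinv (le_of_lt (inv_pos.2 (by nlinarith))) hx0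
        linarith
    _ = ((1 - ‖w‖)⁻¹ / 2 + 1) * (‖w‖ * ‖p‖ ^ k) := by ring

lemma log_summable (hp : ‖p‖ < 1) {w : ℂ} (hw : ‖w‖ < 1) :
    Summable (fun k => Complex.log (1 - w * p ^ k)) := by
  refine Summable.of_norm_bounded (g := fun k => ((1 - ‖w‖)⁻¹ / 2 + 1) * (‖w‖ * ‖p‖ ^ k)) ?_ ?_
  · apply Summable.mul_left
    exact ((summable_geometric_of_lt_one (norm_nonneg p) hp).mul_left _)
  · exact log_norm_le hp hw

lemma qPochInf_eq_exp (hp : ‖p‖ < 1) {w : ℂ} (hw : ‖w‖ < 1) :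
    qPochInf w p = Complex.exp (∑' k, Complex.log (1 - w * p ^ k)) := by
  have h2 := Complex.cexp_tsum_eq_tprod (f := fun k => 1 - w * p ^ k)
    (fun k => one_sub_ne_zero (norm_mul_pow_lt hp hw k))
    (log_summable hp hw)
  simpa [qPochInf] using h2.symm

lemma qPochInf_ne_zero (hp : ‖p‖ < 1) {w : ℂ} (hw : ‖w‖ < 1) : qPochInf w p ≠ 0 := by
  rw [qPochInf_eq_exp hp hw]; exact Complex.exp_ne_zero _

lemma norm_p_mul_lt (hp : ‖p‖ < 1) {w : ℂ} (hw : ‖w‖ < 1) : ‖p * w‖ < 1 := by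
  rw [norm_mul]
  calc ‖p‖ * ‖w‖ ≤ 1 * ‖w‖ := mul_le_mul_of_nonneg_right hp.le (norm_nonneg w)
    _ = ‖w‖ := one_mul _
    _ < 1 := hw

lemma qPochInf_rec (hp : ‖p‖ < 1) {w : ℂ} (hw : ‖w‖ < 1) :
    qPochInf w p = (1 - w) * qPochInf (p * w) p := by
  have hpw : ‖p * w‖ < 1 := norm_p_mul_lt hp hw
  rw [qPochInf_eq_exp hp hw, qPochInf_eq_exp hp hpw]
  have h1 : ∑' k, Complex.log (1 - w * p ^ k)
      = Complex.log (1 - w) + ∑' k, Complex.log (1 - (p * w) * p ^ k) := by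
    rw [Summable.tsum_eq_zero_add (log_summable hp hw)]
    congr 1
    · rw [pow_zero, mul_one]
    · apply tsum_congr; intro k
      congr 1
      rw [pow_succ']
      ring
  rw [h1, Complex.exp_add, Complex.exp_log (one_sub_ne_zero hw)]

lemma qPochInf_tendsto (hp : ‖p‖ < 1) {w : ℂ} (hw : ‖w‖ < 1) :
    Filter.Tendsto (fun N => qPochInf (w * p ^ N) p) Filter.atTop (nhds 1) := by
  have hwN : ∀ N : ℕ, ‖w * p ^ N‖ < 1 := fun N => norm_mul_pow_lt hp hw N
  have hbound : ∀ N : ℕ, ‖∑' k, Complex.log (1 - (w * p ^ N) * p ^ k)‖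
      ≤ ((1 - ‖w‖)⁻¹ / 2 + 1) * (‖w‖ * ‖p‖ ^ N) * (1 - ‖p‖)⁻¹ := by
    intro N
    have hs := log_summable hp (hwN N)
    have hsb : Summable (fun k => ((1 - ‖w * p ^ N‖)⁻¹ / 2 + 1) * (‖w * p ^ N‖ * ‖p‖ ^ k)) := by
      apply Summable.mul_left
      exact ((summable_geometric_of_lt_one (norm_nonneg p) hp).mul_left _)
    calc ‖∑' k, Complex.log (1 - (w * p ^ N) * p ^ k)‖
        ≤ ∑' k, ((1 - ‖w * p ^ N‖)⁻¹ / 2 + 1) * (‖w * p ^ N‖ * ‖p‖ ^ k) :=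
          tsum_of_norm_bounded hsb.hasSum (log_norm_le hp (hwN N))
      _ = ((1 - ‖w * p ^ N‖)⁻¹ / 2 + 1) * ‖w * p ^ N‖ * (1 - ‖p‖)⁻¹ := by
          rw [show (∑' k, ((1 - ‖w * p ^ N‖)⁻¹ / 2 + 1) * (‖w * p ^ N‖ * ‖p‖ ^ k))
            = ((1 - ‖w * p ^ N‖)⁻¹ / 2 + 1) * ‖w * p ^ N‖ * ∑' k, ‖p‖ ^ k from by
              rw [← tsum_mul_left]; apply tsum_congr; intro k; ring]
          rw [tsum_geometric_of_lt_one (norm_nonneg p) hp]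
      _ ≤ ((1 - ‖w‖)⁻¹ / 2 + 1) * (‖w‖ * ‖p‖ ^ N) * (1 - ‖p‖)⁻¹ := by
          have hp1 : (0:ℝ) < 1 - ‖p‖ := by linarith
          have hw1 : (0:ℝ) < 1 - ‖w‖ := by linarith
          have hnle : ‖w * p ^ N‖ ≤ ‖w‖ * ‖p‖ ^ N := by rw [norm_mul, norm_pow]
          have hwNw : ‖w * p ^ N‖ ≤ ‖w‖ := by
            refine hnle.trans ?_
            calc ‖w‖ * ‖p‖ ^ N ≤ ‖w‖ * 1 :=
              mul_le_mul_of_nonneg_left (pow_le_one₀ (norm_nonneg p) hp.le) (norm_nonneg w)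
            _ = ‖w‖ := mul_one _
          have hK : ((1 - ‖w * p ^ N‖)⁻¹ / 2 + 1) ≤ ((1 - ‖w‖)⁻¹ / 2 + 1) := by
            have : (1 - ‖w * p ^ N‖)⁻¹ ≤ (1 - ‖w‖)⁻¹ :=
              inv_anti₀ hw1 (by linarith)
            linarith
          apply mul_le_mul_of_nonneg_right _ (by positivity)
          apply mul_le_mul hK hnle (norm_nonneg _) (by positivity)
  have hS : Filter.Tendsto (fun N => ∑' k, Complex.log (1 - (w * p ^ N) * p ^ k))
      Filter.atTop (nhds 0) := by
    rw [tendsto_zero_iff_norm_tendsto_zero]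
    apply squeeze_zero (fun N => norm_nonneg _) hbound
    rw [show (0:ℝ) = ((1 - ‖w‖)⁻¹ / 2 + 1) * (‖w‖ * 0) * (1 - ‖p‖)⁻¹ from by ring]
    apply Filter.Tendsto.mul_const
    apply Filter.Tendsto.const_mul
    apply Filter.Tendsto.const_mul
    exact tendsto_pow_atTop_nhds_zero_of_lt_one (norm_nonneg p) hp
  have := (Complex.continuous_exp.tendsto 0).comp hS
  rw [Complex.exp_zero] at this
  apply this.congr
  intro N
  simp only [Function.comp_apply]
  exact (qPochInf_eq_exp hp (hwN N)).symm

lemma GG_tendsto (hp : ‖p‖ < 1) {w : ℂ} (hw : ‖w‖ < 1) :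
    Filter.Tendsto (fun N => GG p (w * p ^ N)) Filter.atTop (nhds 1) := by
  have hwN : ∀ N : ℕ, ‖w * p ^ N‖ < 1 := fun N => norm_mul_pow_lt hp hw N
  set C := Real.exp (2 * ‖p‖ / ((1 - ‖p‖) * (1 - ‖p‖))) with hC
  have hw1 : (0:ℝ) < 1 - ‖w‖ := by linarith
  have hbound : ∀ N : ℕ, ‖GG p (w * p ^ N) - 1‖ ≤ C * (‖w‖ * ‖p‖ ^ N) / (1 - ‖w‖) := by
    intro N
    refine (GG_sub_one_norm hp (hwN N)).trans ?_
    have hnle : ‖w * p ^ N‖ ≤ ‖w‖ * ‖p‖ ^ N := by rw [norm_mul, norm_pow]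
    have hwNw : ‖w * p ^ N‖ ≤ ‖w‖ := by
      refine hnle.trans ?_
      calc ‖w‖ * ‖p‖ ^ N ≤ ‖w‖ * 1 :=
        mul_le_mul_of_nonneg_left (pow_le_one₀ (norm_nonneg p) hp.le) (norm_nonneg w)
      _ = ‖w‖ := mul_one _
    apply div_le_div₀ (by positivity)
      (mul_le_mul_of_nonneg_left hnle (Real.exp_pos _).le) (by linarith) (by linarith)
  have h0 : Filter.Tendsto (fun N => GG p (w * p ^ N) - 1) Filter.atTop (nhds 0) := by
    rw [tendsto_zero_iff_norm_tendsto_zero]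
    apply squeeze_zero (fun N => norm_nonneg _) hbound
    rw [show (0:ℝ) = C * (‖w‖ * 0) / (1 - ‖w‖) from by ring]
    apply Filter.Tendsto.div_const
    apply Filter.Tendsto.const_mul
    apply Filter.Tendsto.const_mul
    exact tendsto_pow_atTop_nhds_zero_of_lt_one (norm_nonneg p) hp
  have := h0.add_const 1
  simpa using this
end P

section Key
variable {p : ℂ}

lemma key_identity (hp : ‖p‖ < 1) {w : ℂ} (hw : ‖w‖ < 1) :
    GG p w * qPochInf w p = qPochInf (-(p * w)) p := by
  set D : ℂ → ℂ := fun v => GG p v * qPochInf v p - qPochInf (-(p * v)) p with hD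
  have step : ∀ v : ℂ, ‖v‖ < 1 → D v = (1 + p * v) * D (p * v) := by
    intro v hv
    have hpv : ‖p * v‖ < 1 := norm_p_mul_lt hp hv
    have hnpv : ‖-(p * v)‖ < 1 := by rwa [norm_neg]
    have hH : GG p v * qPochInf v p = (1 + p * v) * (GG p (p * v) * qPochInf (p * v) p) := by
      rw [qPochInf_rec hp hv]
      calc GG p v * ((1 - v) * qPochInf (p * v) p)
          = ((1 - v) * GG p v) * qPochInf (p * v) p := by ring
        _ = ((1 + p * v) * GG p (p * v)) * qPochInf (p * v) p := by rw [GG_funct hp hv]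
        _ = (1 + p * v) * (GG p (p * v) * qPochInf (p * v) p) := by ring
    have hT : qPochInf (-(p * v)) p = (1 + p * v) * qPochInf (-(p * (p * v))) p := by
      rw [qPochInf_rec hp hnpv]
      congr 1
      · ring
      · congr 1; ring
    simp only [hD]
    rw [hH, hT]
    ring
  have hwN : ∀ N : ℕ, ‖w * p ^ N‖ < 1 := fun N => norm_mul_pow_lt hp hw N
  have tele : ∀ N : ℕ, D w = (∏ k ∈ Finset.range N, (1 + p * (w * p ^ k))) * D (w * p ^ N) := by
    intro N
    induction N with
    | zero => simp
    | succ n ih =>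
      rw [ih, Finset.prod_range_succ, step (w * p ^ n) (hwN n)]
      rw [show p * (w * p ^ n) = w * p ^ (n + 1) from by ring]
      ring
  have prodbd : ∀ N : ℕ, ‖∏ k ∈ Finset.range N, (1 + p * (w * p ^ k))‖
      ≤ Real.exp (‖p‖ * ‖w‖ * (1 - ‖p‖)⁻¹) := by
    intro N
    rw [norm_prod]
    calc ∏ k ∈ Finset.range N, ‖1 + p * (w * p ^ k)‖
        ≤ ∏ k ∈ Finset.range N, Real.exp (‖p‖ * ‖w‖ * ‖p‖ ^ k) := by
          apply Finset.prod_le_prod (fun k _ => norm_nonneg _)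
          intro k _
          have h1 : ‖1 + p * (w * p ^ k)‖ ≤ 1 + ‖p‖ * ‖w‖ * ‖p‖ ^ k := by
            have := norm_add_le (1:ℂ) (p * (w * p ^ k))
            rw [norm_one, norm_mul, norm_mul, norm_pow] at this
            calc ‖1 + p * (w * p ^ k)‖ ≤ 1 + ‖p‖ * (‖w‖ * ‖p‖ ^ k) := this
              _ = 1 + ‖p‖ * ‖w‖ * ‖p‖ ^ k := by ring
          refine h1.trans ?_
          have := Real.add_one_le_exp (‖p‖ * ‖w‖ * ‖p‖ ^ k)
          linarith
      _ = Real.exp (∑ k ∈ Finset.range N, ‖p‖ * ‖w‖ * ‖p‖ ^ k) := by rw [Real.exp_sum]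
      _ ≤ Real.exp (‖p‖ * ‖w‖ * (1 - ‖p‖)⁻¹) := by
          apply Real.exp_le_exp.2
          rw [← Finset.mul_sum]
          apply mul_le_mul_of_nonneg_left _ (by positivity)
          have := Summable.sum_le_tsum (Finset.range N) (fun k _ => by positivity)
            (summable_geometric_of_lt_one (norm_nonneg p) hp)
          rwa [tsum_geometric_of_lt_one (norm_nonneg p) hp] at this
  have hDN : Filter.Tendsto (fun N => D (w * p ^ N)) Filter.atTop (nhds 0) := by
    have h1 := (GG_tendsto hp hw).mul (qPochInf_tendsto hp hw)
    have hnw : ‖-(p * w)‖ < 1 := by rw [norm_neg]; exact norm_p_mul_lt hp hw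
    have h2 := qPochInf_tendsto hp hnw
    have h2' : Filter.Tendsto (fun N => qPochInf (-(p * (w * p ^ N))) p)
        Filter.atTop (nhds 1) := by
      apply h2.congr
      intro N
      congr 1
      ring
    have := h1.sub h2'
    simpa using this
  have hzero : Filter.Tendsto (fun _ : ℕ => D w) Filter.atTop (nhds 0) := by
    have heq : (fun N : ℕ => D w)
        = fun N => (∏ k ∈ Finset.range N, (1 + p * (w * p ^ k))) * D (w * p ^ N) := by
      funext N; exact tele N
    rw [heq, tendsto_zero_iff_norm_tendsto_zero]
    apply squeeze_zero (fun N => norm_nonneg _)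
      (g := fun N => Real.exp (‖p‖ * ‖w‖ * (1 - ‖p‖)⁻¹) * ‖D (w * p ^ N)‖)
    · intro N
      rw [norm_mul]
      exact mul_le_mul_of_nonneg_right (prodbd N) (norm_nonneg _)
    · rw [show (0:ℝ) = Real.exp (‖p‖ * ‖w‖ * (1 - ‖p‖)⁻¹) * 0 from by ring]
      exact (tendsto_zero_iff_norm_tendsto_zero.1 hDN).const_mul _
  have : D w = 0 := tendsto_nhds_unique tendsto_const_nhds hzero
  have := sub_eq_zero.1 this
  exact this
end Key

section Rvals
variable {p z : ℂ}

lemma one_add_ne_zero (hp : ‖p‖ < 1) (hz : ‖z‖ < 1) : 1 + p * z ≠ 0 := by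
  have h := one_sub_ne_zero (show ‖-(p*z)‖ < 1 by rw [norm_neg]; exact norm_p_mul_lt hp hz)
  rwa [sub_neg_eq_add] at h

lemma Rone (hp : ‖p‖ < 1) (hz : ‖z‖ < 1) :
    qPochInf z p / qPochInf (-(z * p)) p * GG p z = 1 := by
  have hnz : ‖-(p * z)‖ < 1 := by rw [norm_neg]; exact norm_p_mul_lt hp hz
  rw [show -(z * p) = -(p * z) from by ring, div_mul_eq_mul_div, mul_comm,
    key_identity hp hz, div_self (qPochInf_ne_zero hp hnz)]

lemma RK (hp : ‖p‖ < 1) (hz : ‖z‖ < 1) :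
    qPochInf z p / qPochInf (-(z * p)) p * GG p (p * z) = (1 - z) / (1 + p * z) := by
  have hpz : ‖p * z‖ < 1 := norm_p_mul_lt hp hz
  have hnpz : ‖-(p * z)‖ < 1 := by rwa [norm_neg]
  have hp2z : ‖p * (p * z)‖ < 1 := norm_p_mul_lt hp hpz
  have hnp2z : ‖-(p * (p * z))‖ < 1 := by rwa [norm_neg]
  have k2 := key_identity hp hpz
  have r1 := qPochInf_rec hp hz
  have r2 := qPochInf_rec hp hnpz
  rw [show p * -(p * z) = -(p * (p * z)) from by ring, sub_neg_eq_add] at r2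
  have n1 : qPochInf (p * z) p ≠ 0 := qPochInf_ne_zero hp hpz
  have n2 : qPochInf (-(p * (p * z))) p ≠ 0 := qPochInf_ne_zero hp hnp2z
  have n3 : 1 + p * z ≠ 0 := one_add_ne_zero hp hz
  rw [show -(p * (p * z)) = -(p * p * z) from by ring] at k2 r2 n2
  rw [show -(z * p) = -(p * z) from by ring, r1, r2]
  rw [div_mul_eq_mul_div, div_eq_div_iff (mul_ne_zero n3 n2) n3]
  linear_combination (1 - z + p * z - p * z ^ 2) * k2

lemma term_one (hp : ‖p‖ < 1) (b : ℕ) (v : ℂ) :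
    (qPoch p p b)⁻¹ * (qPoch (p ^ 2) (p ^ 2) b / qPoch p p b * v) = cc p b * v := by
  have h := qPoch_ne_zero hp hp b
  rw [qPoch_sq, cc]
  field_simp

lemma term_AP (hp : ‖p‖ < 1) (hz : ‖z‖ < 1) (b : ℕ) :
    (qPoch p p b)⁻¹ * (qPoch (p ^ 2) (p ^ 2) (b + 1) / qPoch p p (b + 1) * z ^ (b + 1))
      = z * (cc p b * z ^ b) + p * z * (cc p b * (p * z) ^ b) := by
  have h1 : qPoch p p b ≠ 0 := qPoch_ne_zero hp hp b
  have h2 : qPoch p p (b + 1) ≠ 0 := qPoch_ne_zero hp hp (b + 1)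
  have h3 : 1 - p * p ^ b ≠ 0 := one_sub_ne_zero (norm_mul_pow_lt hp hp b)
  rw [qPoch_sq, cc, qPoch_succ p, qPoch_succ (-p), mul_pow, pow_succ]
  field_simp
  ring

lemma term_AM (hp : ‖p‖ < 1) (hz : ‖z‖ < 1) (b : ℕ) :
    (qPoch p p (b + 1))⁻¹ *
        (qPoch (p ^ 2) (p ^ 2) b / qPoch p p b * (z ^ b * (1 - (p ^ 2) ^ (b + 1))))
      = cc p b * z ^ b + p * (cc p b * (p * z) ^ b) := by
  have h1 : qPoch p p b ≠ 0 := qPoch_ne_zero hp hp b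
  have h2 : qPoch p p (b + 1) ≠ 0 := qPoch_ne_zero hp hp (b + 1)
  have h3 : 1 - p * p ^ b ≠ 0 := one_sub_ne_zero (norm_mul_pow_lt hp hp b)
  rw [qPoch_sq, cc, qPoch_succ p, mul_pow]
  have hexp : (1 - (p ^ 2) ^ (b + 1)) = (1 - p * p ^ b) * (1 + p * p ^ b) := by
    rw [pow_succ]; ring
  rw [hexp]
  field_simp
end Rvals

lemma fockOp_single (c : ℕ → ℂ) (g : ℕ → ℕ) (a : ℕ) (v : ℂ) :
    fockOp c g (Finsupp.single a v) = Finsupp.single (g a) (c a * v) := by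
  rw [fockOp, Finsupp.lsum_single]
  simp [Finsupp.smul_single, smul_eq_mul]

/-- the `n = 1` boundary-vector matrix elements
`R^{γδ}_{αβ}(z) = ((z;q³)_∞/(-zq³;q³)_∞) ⟨χ| z^h L^{γδ}_{αβ} |χ⟩` (with
`⟨χ| = ∑ ⟨m|/(q³;q³)_m`, `|χ⟩ = ∑ |m⟩/(q³;q³)_m`, `⟨m|m'⟩ = (q⁶;q⁶)_m δ_{m,m'}`)
evaluate to `R^{00}_{00} = R^{11}_{11} = 1`,
`R^{01}_{01} = q^{3/2}(1-z)/(1+q³z)`, `R^{10}_{10} = -q^{3/2}(1-z)/(1+q³z)`,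
`R^{10}_{01} = (1+q³)z/(1+q³z)`, `R^{01}_{10} = (1+q³)/(1+q³z)`. -/
theorem stmt_18 (q sq z : ℂ) (hsq : sq ^ 2 = q) (hq : ‖q‖ < 1) (hz : ‖z‖ < 1) :
    let zh := fockOp (fun m => z ^ m) id
    let Brk : Module.End ℂ (ℕ →₀ ℂ) → ℂ := fun X =>
      ∑' b : ℕ, (qPoch (q ^ 3) (q ^ 3) b)⁻¹ *
        ((X (Finsupp.single b 1)).sum fun a c =>
          qPoch (q ^ 6) (q ^ 6) a / qPoch (q ^ 3) (q ^ 3) a * c)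
    let nrm := qPochInf z (q ^ 3) / qPochInf (-(z * q ^ 3)) (q ^ 3)
    nrm * Brk (zh * Lmat q sq 0 0 0 0) = 1 ∧
    nrm * Brk (zh * Lmat q sq 1 1 1 1) = 1 ∧
    nrm * Brk (zh * Lmat q sq 0 1 0 1) = sq ^ 3 * (1 - z) / (1 + q ^ 3 * z) ∧
    nrm * Brk (zh * Lmat q sq 1 0 1 0) = -(sq ^ 3 * (1 - z) / (1 + q ^ 3 * z)) ∧
    nrm * Brk (zh * Lmat q sq 1 0 0 1) = (1 + q ^ 3) * z / (1 + q ^ 3 * z) ∧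
    nrm * Brk (zh * Lmat q sq 0 1 1 0) = (1 + q ^ 3) / (1 + q ^ 3 * z) := by
  intro zh Brk nrm
  have hp : ‖q ^ 3‖ < 1 := by
    rw [norm_pow]
    exact pow_lt_one₀ (norm_nonneg q) hq (by norm_num)
  have hpz : ‖q ^ 3 * z‖ < 1 := norm_p_mul_lt hp hz
  have hq6 : q ^ 6 = (q ^ 3) ^ 2 := by ring
  have hnrm : nrm = qPochInf z (q ^ 3) / qPochInf (-(z * q ^ 3)) (q ^ 3) := rfl
  -- generic sum evaluation for the identity-like operators
  have hone : ∀ L : Module.End ℂ (ℕ →₀ ℂ), L = 1 → Brk (zh * L) = GG (q ^ 3) z := by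
    intro L hL
    simp only [Brk]
    rw [show (∑' b : ℕ, (qPoch (q ^ 3) (q ^ 3) b)⁻¹ *
        (((zh * L) (Finsupp.single b 1)).sum fun a c =>
          qPoch (q ^ 6) (q ^ 6) a / qPoch (q ^ 3) (q ^ 3) a * c))
        = ∑' b : ℕ, cc (q ^ 3) b * z ^ b from ?_]
    · rfl
    apply tsum_congr
    intro b
    rw [Module.End.mul_apply, hL, Module.End.one_apply]
    simp only [zh]
    rw [fockOp_single, Finsupp.sum_single_index (by simp), id_eq, hq6,
      term_one hp b, mul_one]
  -- the K-type sum
  have hKsum : Brk (zh * fockOp (fun m => sq ^ 3 * q ^ (3 * m)) id)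
      = sq ^ 3 * GG (q ^ 3) (q ^ 3 * z) := by
    simp only [Brk]
    rw [show (∑' b : ℕ, (qPoch (q ^ 3) (q ^ 3) b)⁻¹ *
        (((zh * fockOp (fun m => sq ^ 3 * q ^ (3 * m)) id) (Finsupp.single b 1)).sum fun a c =>
          qPoch (q ^ 6) (q ^ 6) a / qPoch (q ^ 3) (q ^ 3) a * c))
        = ∑' b : ℕ, sq ^ 3 * (cc (q ^ 3) b * (q ^ 3 * z) ^ b) from ?_]
    · rw [tsum_mul_left]; rfl
    apply tsum_congr
    intro b
    rw [Module.End.mul_apply, fockOp_single]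
    simp only [zh, id_eq]
    rw [fockOp_single, Finsupp.sum_single_index (by simp), id_eq, hq6, term_one hp b]
    rw [pow_mul q 3 b, mul_pow]
    ring
  -- goal 3 and 4 value
  have hKval : nrm * (sq ^ 3 * GG (q ^ 3) (q ^ 3 * z)) = sq ^ 3 * (1 - z) / (1 + q ^ 3 * z) := by
    calc nrm * (sq ^ 3 * GG (q ^ 3) (q ^ 3 * z))
        = sq ^ 3 * (nrm * GG (q ^ 3) (q ^ 3 * z)) := by ring
      _ = sq ^ 3 * ((1 - z) / (1 + q ^ 3 * z)) := by rw [hnrm, RK hp hz]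
      _ = sq ^ 3 * (1 - z) / (1 + q ^ 3 * z) := (mul_div_assoc _ _ _).symm
  have hR1 : nrm * GG (q ^ 3) z = 1 := by rw [hnrm]; exact Rone hp hz
  have hRK : nrm * GG (q ^ 3) (q ^ 3 * z) = (1 - z) / (1 + q ^ 3 * z) := by
    rw [hnrm]; exact RK hp hz
  have n3 : 1 + q ^ 3 * z ≠ 0 := one_add_ne_zero hp hz
  -- AP sum
  have hAPsum : Brk (zh * fockOp (fun _ => 1) (· + 1))
      = z * GG (q ^ 3) z + q ^ 3 * z * GG (q ^ 3) (q ^ 3 * z) := by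
    simp only [Brk]
    rw [show (∑' b : ℕ, (qPoch (q ^ 3) (q ^ 3) b)⁻¹ *
        (((zh * fockOp (fun _ => 1) (· + 1)) (Finsupp.single b 1)).sum fun a c =>
          qPoch (q ^ 6) (q ^ 6) a / qPoch (q ^ 3) (q ^ 3) a * c))
        = ∑' b : ℕ, (z * (cc (q ^ 3) b * z ^ b)
            + q ^ 3 * z * (cc (q ^ 3) b * (q ^ 3 * z) ^ b)) from ?_]
    · rw [Summable.tsum_add ((cc_summable hp hz).mul_left z) ((cc_summable hp hpz).mul_left (q ^ 3 * z)),
        tsum_mul_left, tsum_mul_left]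
      rfl
    apply tsum_congr
    intro b
    rw [Module.End.mul_apply, fockOp_single]
    simp only [zh, id_eq]
    rw [fockOp_single, Finsupp.sum_single_index (by simp), id_eq, hq6]
    rw [one_mul, mul_one]
    exact term_AP hp hz b
  -- AM sum
  have hAMsum : Brk (zh * fockOp (fun m => 1 - q ^ (6 * m)) (· - 1))
      = GG (q ^ 3) z + q ^ 3 * GG (q ^ 3) (q ^ 3 * z) := by
    simp only [Brk]
    have hA : ∀ b : ℕ, (qPoch (q ^ 3) (q ^ 3) b)⁻¹ *
        (((zh * fockOp (fun m => 1 - q ^ (6 * m)) (· - 1)) (Finsupp.single b 1)).sum fun a c =>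
          qPoch (q ^ 6) (q ^ 6) a / qPoch (q ^ 3) (q ^ 3) a * c)
        = (qPoch (q ^ 3) (q ^ 3) b)⁻¹ *
            (qPoch ((q ^ 3) ^ 2) ((q ^ 3) ^ 2) (b - 1) / qPoch (q ^ 3) (q ^ 3) (b - 1)
              * (z ^ (b - 1) * (1 - ((q ^ 3) ^ 2) ^ b))) := by
      intro b
      rw [Module.End.mul_apply, fockOp_single]
      simp only [zh, id_eq]
      rw [fockOp_single, Finsupp.sum_single_index (by simp), id_eq, hq6]
      rw [mul_one, pow_mul q 6 b, hq6]
    rw [tsum_congr hA]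
    set A : ℕ → ℂ := fun b => (qPoch (q ^ 3) (q ^ 3) b)⁻¹ *
        (qPoch ((q ^ 3) ^ 2) ((q ^ 3) ^ 2) (b - 1) / qPoch (q ^ 3) (q ^ 3) (b - 1)
          * (z ^ (b - 1) * (1 - ((q ^ 3) ^ 2) ^ b))) with hAdef
    have hshift : ∀ b : ℕ, cc (q ^ 3) b * z ^ b + q ^ 3 * (cc (q ^ 3) b * (q ^ 3 * z) ^ b)
        = A (b + 1) := by
      intro b
      simp only [hAdef, Nat.add_sub_cancel]
      exact (term_AM hp hz b).symm
    have hsumA : Summable A := by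
      rw [← summable_nat_add_iff 1]
      apply Summable.congr (((cc_summable hp hz).add
        ((cc_summable hp hpz).mul_left (q ^ 3))))
      exact hshift
    rw [Summable.tsum_eq_zero_add hsumA]
    have hA0 : A 0 = 0 := by simp [hAdef]
    rw [hA0, zero_add, tsum_congr (fun b => (hshift b).symm),
      Summable.tsum_add (cc_summable hp hz) ((cc_summable hp hpz).mul_left (q ^ 3)), tsum_mul_left]
    rfl
  refine ⟨?_, ?_, ?_, ?_, ?_, ?_⟩
  · rw [hone _ (by simp [Lmat]), hR1]
  · rw [hone _ (by simp [Lmat]), hR1]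
  · rw [show Lmat q sq 0 1 0 1 = fockOp (fun m => sq ^ 3 * q ^ (3 * m)) id from by simp [Lmat],
      hKsum, hKval]
  · have hneg : Brk (zh * Lmat q sq 1 0 1 0)
        = -(sq ^ 3 * GG (q ^ 3) (q ^ 3 * z)) := by
      rw [show Lmat q sq 1 0 1 0 = -fockOp (fun m => sq ^ 3 * q ^ (3 * m)) id from by simp [Lmat]]
      rw [show zh * -fockOp (fun m => sq ^ 3 * q ^ (3 * m)) id
          = -(zh * fockOp (fun m => sq ^ 3 * q ^ (3 * m)) id) from by
        apply LinearMap.ext; intro v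
        simp [Module.End.mul_apply]]
      simp only [Brk]
      rw [show (∑' b : ℕ, (qPoch (q ^ 3) (q ^ 3) b)⁻¹ *
          (((-(zh * fockOp (fun m => sq ^ 3 * q ^ (3 * m)) id)) (Finsupp.single b 1)).sum fun a c =>
            qPoch (q ^ 6) (q ^ 6) a / qPoch (q ^ 3) (q ^ 3) a * c))
          = ∑' b : ℕ, -(sq ^ 3 * (cc (q ^ 3) b * (q ^ 3 * z) ^ b)) from ?_]
      · rw [tsum_neg, tsum_mul_left]; rfl
      apply tsum_congr
      intro b
      rw [LinearMap.neg_apply, Module.End.mul_apply, fockOp_single]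
      simp only [zh, id_eq]
      rw [fockOp_single, ← Finsupp.single_neg, Finsupp.sum_single_index (by simp), id_eq, hq6,
        term_one hp b]
      rw [pow_mul q 3 b, mul_pow]
      ring
    rw [hneg]
    rw [show nrm * -(sq ^ 3 * GG (q ^ 3) (q ^ 3 * z))
        = -(nrm * (sq ^ 3 * GG (q ^ 3) (q ^ 3 * z))) from by ring, hKval]
  · rw [show Lmat q sq 1 0 0 1 = fockOp (fun _ => 1) (· + 1) from by simp [Lmat], hAPsum]
    calc nrm * (z * GG (q ^ 3) z + q ^ 3 * z * GG (q ^ 3) (q ^ 3 * z))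
        = z * (nrm * GG (q ^ 3) z) + q ^ 3 * z * (nrm * GG (q ^ 3) (q ^ 3 * z)) := by ring
      _ = z * 1 + q ^ 3 * z * ((1 - z) / (1 + q ^ 3 * z)) := by rw [hR1, hRK]
      _ = (1 + q ^ 3) * z / (1 + q ^ 3 * z) := by
          rw [eq_div_iff n3, add_mul, mul_assoc (q ^ 3 * z), div_mul_cancel₀ _ n3]; ring
  · rw [show Lmat q sq 0 1 1 0 = fockOp (fun m => 1 - q ^ (6 * m)) (· - 1) from by simp [Lmat],
      hAMsum]
    calc nrm * (GG (q ^ 3) z + q ^ 3 * GG (q ^ 3) (q ^ 3 * z))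
        = (nrm * GG (q ^ 3) z) + q ^ 3 * (nrm * GG (q ^ 3) (q ^ 3 * z)) := by ring
      _ = 1 + q ^ 3 * ((1 - z) / (1 + q ^ 3 * z)) := by rw [hR1, hRK]
      _ = (1 + q ^ 3) / (1 + q ^ 3 * z) := by field_simp; ring
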